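/- Let G : ℕ → ℂ satisfy G(i+2) = G(i+1) + G(i) for all i ≥ 0, let r be a nonnegative integer, and let w ∈ ℂ with 1 − w − w² ≠ 0. Assume that for every nonnegative integer m ≤ r, k^m · w^k · G(k) → 0 as k → ∞. Then the series ∑_{j=0}^{∞} w^j · j^r · G(j) converges and equals −G(0) · ∑_{m=0}^{r} C(r, m)·(w − δ_{r,m})·A(w; m) + w·G(1) · ∑_{m=0}^{r} C(r, m)·A(w; m), where A(w; m) = (Dᵐ f)(w) for f(w) = 1/(1 − w − w²) and (D f)(w) = w·f′(w). -/

import Mathlib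

open Filter

/-- The operator `D` acting on functions `f : ℂ → ℂ` by `(D f)(w) = w * f'(w)`. -/
noncomputable def Dop (f : ℂ → ℂ) : ℂ → ℂ := fun w => w * deriv f w

/-- `A w m = (Dᵐ f)(w)` where `f w = 1 / (1 - w - w²)`. -/
noncomputable def A (w : ℂ) (m : ℕ) : ℂ :=
  (Dop^[m] (fun z => 1 / (1 - z - z ^ 2))) w

lemma A_succ (w : ℂ) (m : ℕ) : A w (m+1) = w * deriv (fun z => A z m) w := by
  simp only [A, Function.iterate_succ_apply']; rfl

lemma A_analytic (m : ℕ) : AnalyticOnNhd ℂ (fun z => A z m) {z : ℂ | 1 - z - z^2 ≠ 0} := by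
  induction m with
  | zero =>
    have : (fun z : ℂ => A z 0) = fun z => 1 / (1 - z - z^2) := rfl
    rw [this]
    exact (analyticOnNhd_const).div
      (((analyticOnNhd_const).sub (analyticOnNhd_id)).sub ((analyticOnNhd_id).pow 2))
      (fun z hz => hz)
  | succ m ih =>
    have : (fun z : ℂ => A z (m+1)) = fun z => z * deriv (fun y => A y m) z := by
      funext z; exact A_succ z m
    rw [this]
    exact analyticOnNhd_id.mul ih.deriv

lemma isOpen_U : IsOpen {z : ℂ | 1 - z - z^2 ≠ 0} := by
  have : {z : ℂ | 1 - z - z^2 ≠ 0} = (fun z : ℂ => 1 - z - z^2) ⁻¹' {0}ᶜ := rfl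
  rw [this]
  exact (isOpen_compl_singleton).preimage (by continuity)

lemma A_rel (m : ℕ) (z : ℂ) (hz : 1 - z - z^2 ≠ 0) :
    (1 - z - z^2) * A z m
      = (0:ℂ)^m + ∑ k ∈ Finset.range m, (m.choose k : ℂ) * (z + 2^(m-k) * z^2) * A z k := by
  induction m generalizing z with
  | zero =>
    simp only [pow_zero, Finset.range_zero, Finset.sum_empty, add_zero]
    have : A z 0 = 1 / (1 - z - z^2) := rfl
    rw [this]; field_simp
  | succ m ih =>
    have hdiff : ∀ k, DifferentiableAt ℂ (fun y => A y k) z :=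
      fun k => ((A_analytic k) z hz).differentiableAt
    -- derivative of LHS function
    have hq : HasDerivAt (fun y : ℂ => 1 - y - y^2) (-1 - 2*z) z := by
      have h1 := ((hasDerivAt_const z (1:ℂ)).fun_sub (hasDerivAt_id z)).fun_sub (hasDerivAt_pow 2 z)
      simpa using h1
    have hL : HasDerivAt (fun y => (1 - y - y^2) * A y m)
        ((-1 - 2*z) * A z m + (1 - z - z^2) * deriv (fun y => A y m) z) z :=
      hq.mul (hdiff m).hasDerivAt
    have hR : HasDerivAt (fun y => (0:ℂ)^m + ∑ k ∈ Finset.range m,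
          (m.choose k : ℂ) * (y + 2^(m-k) * y^2) * A y k)
        (∑ k ∈ Finset.range m, ((m.choose k : ℂ) * (1 + 2^(m-k) * (2*z)) * A z k
          + (m.choose k : ℂ) * (z + 2^(m-k) * z^2) * deriv (fun y => A y k) z)) z := by
      refine (HasDerivAt.const_add _ ?_)
      refine HasDerivAt.fun_sum (fun k _ => ?_)
      have hp : HasDerivAt (fun y : ℂ => (m.choose k : ℂ) * (y + 2^(m-k) * y^2))
          ((m.choose k : ℂ) * (1 + 2^(m-k) * (2*z))) z := by
        have := ((hasDerivAt_id z).add ((hasDerivAt_pow 2 z).const_mul ((2:ℂ)^(m-k)))).const_mul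
          ((m.choose k : ℂ))
        simpa using this
      simpa using hp.fun_mul (hdiff k).hasDerivAt
    have heq : (fun y => (1 - y - y^2) * A y m) =ᶠ[nhds z]
        (fun y => (0:ℂ)^m + ∑ k ∈ Finset.range m,
          (m.choose k : ℂ) * (y + 2^(m-k) * y^2) * A y k) := by
      filter_upwards [isOpen_U.mem_nhds hz] with y hy using ih y hy
    have h0 : (-1 - 2*z) * A z m + (1 - z - z^2) * deriv (fun y => A y m) z
        = ∑ k ∈ Finset.range m, ((m.choose k : ℂ) * (1 + 2^(m-k) * (2*z)) * A z k
          + (m.choose k : ℂ) * (z + 2^(m-k) * z^2) * deriv (fun y => A y k) z) := by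
      rw [← hL.deriv, heq.deriv_eq, hR.deriv]
    have hkey : (-z - 2*z^2) * A z m + (1 - z - z^2) * A z (m+1)
        = ∑ k ∈ Finset.range m, ((m.choose k : ℂ) * (z + 2^(m-k) * (2*z^2)) * A z k
          + (m.choose k : ℂ) * (z + 2^(m-k) * z^2) * A z (k+1)) := by
      calc (-z - 2*z^2) * A z m + (1 - z - z^2) * A z (m+1)
          = z * ((-1 - 2*z) * A z m + (1 - z - z^2) * deriv (fun y => A y m) z) := by
            rw [A_succ]; ring
        _ = z * ∑ k ∈ Finset.range m, ((m.choose k : ℂ) * (1 + 2^(m-k) * (2*z)) * A z k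
            + (m.choose k : ℂ) * (z + 2^(m-k) * z^2) * deriv (fun y => A y k) z) := by rw [h0]
        _ = ∑ k ∈ Finset.range m, z * ((m.choose k : ℂ) * (1 + 2^(m-k) * (2*z)) * A z k
            + (m.choose k : ℂ) * (z + 2^(m-k) * z^2) * deriv (fun y => A y k) z) :=
            Finset.mul_sum _ _ _
        _ = _ := by
            refine Finset.sum_congr rfl (fun k _ => ?_)
            rw [A_succ]; ring
    -- now pure sum manipulation
    have hsplit : ∑ k ∈ Finset.range m, ((m.choose k : ℂ) * (z + 2^(m-k) * (2*z^2)) * A z k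
          + (m.choose k : ℂ) * (z + 2^(m-k) * z^2) * A z (k+1))
        = (∑ k ∈ Finset.range m, (m.choose k : ℂ) * (z + 2^(m+1-k) * z^2) * A z k)
          + ∑ k ∈ Finset.range m, (m.choose k : ℂ) * (z + 2^(m-k) * z^2) * A z (k+1) := by
      rw [← Finset.sum_add_distrib]
      refine Finset.sum_congr rfl (fun k hk => ?_)
      have : m + 1 - k = (m - k) + 1 := by
        have := Finset.mem_range.mp hk; omega
      rw [this, pow_succ]; ring
    have e1 : ∑ k ∈ Finset.range (m+1), ((m+1).choose k : ℂ) * (z + 2^(m+1-k) * z^2) * A z k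
        = (∑ k ∈ Finset.range m, (m.choose k : ℂ) * (z + 2^(m-k) * z^2) * A z (k+1)
          + ∑ k ∈ Finset.range m, (m.choose (k+1) : ℂ) * (z + 2^(m-k) * z^2) * A z (k+1))
          + (z + 2^(m+1) * z^2) * A z 0 := by
      rw [Finset.sum_range_succ', ← Finset.sum_add_distrib]
      congr 1
      · refine Finset.sum_congr rfl (fun k hk => ?_)
        have h1 : m + 1 - (k+1) = m - k := by omega
        rw [h1, Nat.choose_succ_succ]
        push_cast; ring
      · simp
    have e2 : (∑ k ∈ Finset.range m, (m.choose k : ℂ) * (z + 2^(m+1-k) * z^2) * A z k)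
          + (z + 2*z^2) * A z m
        = (∑ k ∈ Finset.range m, (m.choose (k+1) : ℂ) * (z + 2^(m-k) * z^2) * A z (k+1))
          + (z + 2^(m+1) * z^2) * A z 0 := by
      have h3 : (∑ k ∈ Finset.range m, (m.choose k : ℂ) * (z + 2^(m+1-k) * z^2) * A z k)
          + (z + 2*z^2) * A z m
          = ∑ k ∈ Finset.range (m+1), (m.choose k : ℂ) * (z + 2^(m+1-k) * z^2) * A z k := by
        rw [Finset.sum_range_succ]
        simp
      rw [h3, Finset.sum_range_succ']
      congr 1
      · refine Finset.sum_congr rfl (fun k hk => ?_)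
        have h1 : m + 1 - (k+1) = m - k := by omega
        rw [h1]
      · simp
    rw [hsplit] at hkey
    rw [zero_pow (Nat.succ_ne_zero m), e1]
    linear_combination hkey + e2

lemma S_rel_raw (w : ℂ) (hw : 1 - w - w^2 ≠ 0) (m : ℕ) :
    (1 - w - w^2) * ∑ k ∈ Finset.range (m+1), (m.choose k : ℂ) * A w k
      = 1 + ∑ k ∈ Finset.range m, (m.choose k : ℂ) * (w + 2^(m-k) * w^2)
          * ∑ j ∈ Finset.range (k+1), (k.choose j : ℂ) * A w j := by
  rw [Finset.mul_sum]
  have step1 : ∀ k ∈ Finset.range (m+1),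
      (1 - w - w^2) * ((m.choose k : ℂ) * A w k)
        = (m.choose k : ℂ) * (0:ℂ)^k + ∑ j ∈ Finset.range k,
            (m.choose k : ℂ) * ((k.choose j : ℂ) * (w + 2^(k-j) * w^2) * A w j) := by
    intro k _
    rw [show (1 - w - w^2) * ((m.choose k : ℂ) * A w k)
        = (m.choose k : ℂ) * ((1 - w - w^2) * A w k) from by ring,
      A_rel k w hw, mul_add, Finset.mul_sum]
  rw [Finset.sum_congr rfl step1, Finset.sum_add_distrib]
  have h1 : ∑ k ∈ Finset.range (m+1), (m.choose k : ℂ) * (0:ℂ)^k = 1 := by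
    rw [Finset.sum_eq_single 0]
    · simp
    · intro k _ hk; rw [zero_pow hk, mul_zero]
    · intro h; exact absurd (Finset.mem_range.mpr (Nat.succ_pos m)) h
  rw [h1]
  congr 1
  -- double sum equality
  have hR : ∀ k ∈ Finset.range m,
      (m.choose k : ℂ) * (w + 2^(m-k) * w^2) * ∑ j ∈ Finset.range (k+1), (k.choose j : ℂ) * A w j
        = ∑ j ∈ Finset.range (k+1),
            (m.choose k : ℂ) * (w + 2^(m-k) * w^2) * ((k.choose j : ℂ) * A w j) := by
    intro k _; rw [Finset.mul_sum]
  rw [Finset.sum_congr rfl hR]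
  rw [Finset.sum_sigma', Finset.sum_sigma']
  refine Finset.sum_nbij' (fun p => ⟨m + p.2 - p.1, p.2⟩) (fun p => ⟨m + p.2 - p.1, p.2⟩)
    ?_ ?_ ?_ ?_ ?_
  · rintro ⟨k, j⟩ hkj
    simp only [Finset.mem_sigma, Finset.mem_range] at hkj ⊢
    omega
  · rintro ⟨k, j⟩ hkj
    simp only [Finset.mem_sigma, Finset.mem_range] at hkj ⊢
    omega
  · rintro ⟨k, j⟩ hkj
    simp only [Finset.mem_sigma, Finset.mem_range] at hkj
    have h : m + j - (m + j - k) = k := by omega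
    simp [h]
  · rintro ⟨k, j⟩ hkj
    simp only [Finset.mem_sigma, Finset.mem_range] at hkj
    have h : m + j - (m + j - k) = k := by omega
    simp [h]
  · rintro ⟨k, j⟩ hkj
    simp only [Finset.mem_sigma, Finset.mem_range] at hkj
    obtain ⟨hk, hj⟩ := hkj
    have hjk : j ≤ k := Nat.le_of_lt hj
    have hkm : k ≤ m := Nat.lt_succ_iff.mp hk
    have hsub : m - (m + j - k) = k - j := by omega
    have hchoose : m.choose k * k.choose j = m.choose (m + j - k) * ((m + j - k).choose j) := by
      have e1 : m.choose k * k.choose j = m.choose j * (m - j).choose (k - j) :=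
        Nat.choose_mul hjk
      have e2 : m.choose (m + j - k) * ((m + j - k).choose j)
          = m.choose j * (m - j).choose (m + j - k - j) :=
        Nat.choose_mul (by omega)
      rw [e1, e2]
      congr 1
      have h3 : m + j - k - j = m - k := by omega
      rw [h3, ← Nat.choose_symm (by omega : k - j ≤ m - j)]
      congr 1
      omega
    simp only [hsub]
    have : ((m.choose (m + j - k) : ℂ) * ((m + j - k).choose j : ℂ))
        = (m.choose k : ℂ) * (k.choose j : ℂ) := by
      rw [← Nat.cast_mul, ← Nat.cast_mul, ← hchoose]
    linear_combination (w + 2^(k-j) * w^2) * A w j * this.symm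

noncomputable def Sv (w : ℂ) (m : ℕ) : ℂ := ∑ k ∈ Finset.range (m+1), (m.choose k : ℂ) * A w k

noncomputable def Vv (G : ℕ → ℂ) (w : ℂ) (m : ℕ) : ℂ :=
  -(G 0) * (w * Sv w m - A w m) + w * G 1 * Sv w m

lemma S_rel (w : ℂ) (hw : 1 - w - w^2 ≠ 0) (m : ℕ) :
    (1 - w - w^2) * Sv w m
      = 1 + ∑ k ∈ Finset.range m, (m.choose k : ℂ) * (w + 2^(m-k) * w^2) * Sv w k := by
  simpa only [Sv] using S_rel_raw w hw m

lemma V_rel (G : ℕ → ℂ) (w : ℂ) (hw : 1 - w - w^2 ≠ 0) (m : ℕ) :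
    (1 - w - w^2) * Vv G w m
      = (0:ℂ)^m * G 0 + w * G 1 - w * G 0
        + w * ∑ k ∈ Finset.range m, (m.choose k : ℂ) * Vv G w k
        + w^2 * ∑ k ∈ Finset.range m, (m.choose k : ℂ) * 2^(m-k) * Vv G w k := by
  have hA := A_rel m w hw
  have hS := S_rel w hw m
  have hcomb : w * ∑ k ∈ Finset.range m, (m.choose k : ℂ) * Vv G w k
      + w^2 * ∑ k ∈ Finset.range m, (m.choose k : ℂ) * 2^(m-k) * Vv G w k
      = ∑ k ∈ Finset.range m, (m.choose k : ℂ) * (w + 2^(m-k) * w^2) * Vv G w k := by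
    rw [Finset.mul_sum, Finset.mul_sum, ← Finset.sum_add_distrib]
    exact Finset.sum_congr rfl (fun k _ => by ring)
  have hexp : ∑ k ∈ Finset.range m, (m.choose k : ℂ) * (w + 2^(m-k) * w^2) * Vv G w k
      = -(G 0) * (w * (∑ k ∈ Finset.range m, (m.choose k : ℂ) * (w + 2^(m-k) * w^2) * Sv w k)
          - ∑ k ∈ Finset.range m, (m.choose k : ℂ) * (w + 2^(m-k) * w^2) * A w k)
        + w * G 1 * ∑ k ∈ Finset.range m, (m.choose k : ℂ) * (w + 2^(m-k) * w^2) * Sv w k := by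
    simp only [Vv]
    rw [Finset.mul_sum, Finset.mul_sum, ← Finset.sum_sub_distrib]
    rw [show -(G 0) * (∑ k ∈ Finset.range m, (w * ((m.choose k : ℂ) * (w + 2^(m-k) * w^2) * Sv w k)
        - (m.choose k : ℂ) * (w + 2^(m-k) * w^2) * A w k))
      = ∑ k ∈ Finset.range m, -(G 0) * (w * ((m.choose k : ℂ) * (w + 2^(m-k) * w^2) * Sv w k)
        - (m.choose k : ℂ) * (w + 2^(m-k) * w^2) * A w k) from Finset.mul_sum _ _ _]
    rw [← Finset.sum_add_distrib]
    exact Finset.sum_congr rfl (fun k _ => by ring)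
  simp only [Vv]
  simp only [Vv] at hcomb hexp
  linear_combination (w * G 1 - w * G 0) * hS + G 0 * hA - hcomb - hexp


noncomputable def Pp (G : ℕ → ℂ) (w : ℂ) (m n : ℕ) : ℂ :=
  ∑ j ∈ Finset.range n, w^j * (j:ℂ)^m * G j

lemma Pp_succ (G : ℕ → ℂ) (w : ℂ) (m n : ℕ) :
    Pp G w m (n+1) = Pp G w m n + w^n * (n:ℂ)^m * G n := by
  simp [Pp, Finset.sum_range_succ]

lemma binom1 (x : ℂ) (m : ℕ) :
    (x + 1)^m = ∑ k ∈ Finset.range m, (m.choose k : ℂ) * x^k + x^m := by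
  rw [add_pow, Finset.sum_range_succ]
  simp only [one_pow, Nat.choose_self, Nat.cast_one, mul_one, Nat.sub_self, pow_zero]
  congr 1
  exact Finset.sum_congr rfl (fun k _ => by ring)

lemma binom2 (x : ℂ) (m : ℕ) :
    (x + 2)^m = ∑ k ∈ Finset.range m, (m.choose k : ℂ) * 2^(m-k) * x^k + x^m := by
  rw [add_pow, Finset.sum_range_succ]
  simp only [Nat.choose_self, Nat.cast_one, mul_one, Nat.sub_self, pow_zero]
  congr 1
  exact Finset.sum_congr rfl (fun k _ => by ring)

lemma P_rec (G : ℕ → ℂ) (hG : ∀ i, G (i + 2) = G (i + 1) + G i) (w : ℂ) (m n : ℕ) :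
    Pp G w m (n+2)
      = w * Pp G w m (n+1) + w^2 * Pp G w m n
        + ((0:ℂ)^m * G 0 + w * G 1 - w * G 0)
        + w * ∑ k ∈ Finset.range m, (m.choose k : ℂ) * Pp G w k (n+1)
        + w^2 * ∑ k ∈ Finset.range m, (m.choose k : ℂ) * 2^(m-k) * Pp G w k n := by
  induction n with
  | zero =>
    have h1 : Pp G w m 2 = (0:ℂ)^m * G 0 + w * (1:ℂ)^m * G 1 := by
      simp [Pp, Finset.sum_range_succ]
    have h2 : ∀ k, Pp G w k 1 = (0:ℂ)^k * G 0 := by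
      intro k; simp [Pp]
    have h3 : ∀ k, Pp G w k 0 = 0 := by intro k; simp [Pp]
    rw [h1, h2, h3]
    simp only [h2, h3, mul_zero, Finset.sum_const_zero]
    cases m with
    | zero => simp
    | succ m' =>
      have hsum : ∑ k ∈ Finset.range (m'+1), ((m'+1).choose k : ℂ) * ((0:ℂ)^k * G 0) = G 0 := by
        rw [Finset.sum_eq_single 0]
        · simp
        · intro k _ hk; rw [zero_pow hk]; ring
        · intro h; exact absurd (Finset.mem_range.mpr (Nat.succ_pos m')) h
      rw [hsum]
      rw [zero_pow (Nat.succ_ne_zero m'), one_pow]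
      ring
  | succ n ih =>
    have h1 := binom1 ((n:ℂ)+1) m
    have h2 := binom2 ((n:ℂ)) m
    have hs1 : ∑ k ∈ Finset.range m, (m.choose k : ℂ) * Pp G w k (n+2)
        = ∑ k ∈ Finset.range m, (m.choose k : ℂ) * Pp G w k (n+1)
          + ((((n:ℂ)+1)+1)^m - ((n:ℂ)+1)^m) * (w^(n+1) * G (n+1)) := by
      have : ∀ k ∈ Finset.range m, (m.choose k : ℂ) * Pp G w k (n+2)
          = (m.choose k : ℂ) * Pp G w k (n+1)
            + (m.choose k : ℂ) * ((n:ℂ)+1)^k * (w^(n+1) * G (n+1)) := by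
        intro k _
        rw [show n+2 = (n+1)+1 from rfl, Pp_succ]
        push_cast
        ring
      rw [Finset.sum_congr rfl this, Finset.sum_add_distrib]
      congr 1
      rw [← Finset.sum_mul]
      congr 1
      rw [h1]
      ring
    have hs2 : ∑ k ∈ Finset.range m, (m.choose k : ℂ) * 2^(m-k) * Pp G w k (n+1)
        = ∑ k ∈ Finset.range m, (m.choose k : ℂ) * 2^(m-k) * Pp G w k n
          + (((n:ℂ)+2)^m - (n:ℂ)^m) * (w^n * G n) := by
      have : ∀ k ∈ Finset.range m, (m.choose k : ℂ) * 2^(m-k) * Pp G w k (n+1)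
          = (m.choose k : ℂ) * 2^(m-k) * Pp G w k n
            + (m.choose k : ℂ) * 2^(m-k) * (n:ℂ)^k * (w^n * G n) := by
        intro k _
        rw [Pp_succ]
        ring
      rw [Finset.sum_congr rfl this, Finset.sum_add_distrib]
      congr 1
      rw [← Finset.sum_mul]
      congr 1
      rw [h2]
      ring
    have e2 := Pp_succ G w m (n+2)
    have e1 := Pp_succ G w m (n+1)
    have e0 := Pp_succ G w m n
    have hGn := hG n
    rw [show n+1+2 = (n+2)+1 from rfl, e2, hs1, hs2, hGn]
    push_cast at e1 e0 ⊢
    linear_combination ih - w * e1 - w^2 * e0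


lemma not_tendsto_aux (c d x y : ℂ) (m : ℕ) (hc : c ≠ 0) (hx : 1 ≤ ‖x‖) (hyx : ‖y‖ < ‖x‖) :
    ¬ Tendsto (fun k : ℕ => c * ((k:ℂ)^m * x^k) + d * ((k:ℂ)^m * y^k)) atTop (nhds 0) := by
  intro h
  have hx0 : (0:ℝ) < ‖x‖ := lt_of_lt_of_le one_pos hx
  have hc0 : (0:ℝ) < ‖c‖ := norm_pos_iff.mpr hc
  have hq1 : ‖y‖ / ‖x‖ < 1 := (div_lt_one hx0).mpr hyx
  have hq0 : 0 ≤ ‖y‖ / ‖x‖ := div_nonneg (norm_nonneg y) hx0.le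
  have h1 : Tendsto (fun k : ℕ => ‖d‖ * (‖y‖/‖x‖)^k) atTop (nhds 0) := by
    have := (tendsto_pow_atTop_nhds_zero_of_lt_one hq0 hq1).const_mul ‖d‖
    simpa using this
  have h2 : ∀ᶠ k : ℕ in atTop, ‖d‖ * (‖y‖/‖x‖)^k < ‖c‖/2 :=
    h1.eventually_lt_const (by positivity)
  have h3 : ∀ᶠ k : ℕ in atTop,
      ‖c * ((k:ℂ)^m * x^k) + d * ((k:ℂ)^m * y^k)‖ < ‖c‖/2 := by
    have hn : Tendsto (fun k : ℕ => ‖c * ((k:ℂ)^m * x^k) + d * ((k:ℂ)^m * y^k)‖) atTop (nhds 0) := by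
      simpa using h.norm
    exact hn.eventually_lt_const (by positivity)
  have h4 : ∀ᶠ k : ℕ in atTop, (1:ℕ) ≤ k := eventually_ge_atTop 1
  obtain ⟨k, hk⟩ := (h2.and (h3.and h4)).exists
  obtain ⟨hk2, hk3, hk1⟩ := hk
  set A := c * ((k:ℂ)^m * x^k)
  set B := d * ((k:ℂ)^m * y^k)
  have hA : ‖A‖ = ‖c‖ * ((k:ℝ)^m * ‖x‖^k) := by
    simp [A, norm_mul, norm_pow, Complex.norm_natCast]
  have hB : ‖B‖ = ‖d‖ * ((k:ℝ)^m * ‖y‖^k) := by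
    simp [B, norm_mul, norm_pow, Complex.norm_natCast]
  have hBlt : ‖B‖ < (‖c‖/2) * ((k:ℝ)^m * ‖x‖^k) := by
    rw [hB]
    have heq : ‖d‖ * ((k:ℝ)^m * ‖y‖^k) = (‖d‖ * (‖y‖/‖x‖)^k) * ((k:ℝ)^m * ‖x‖^k) := by
      calc ‖d‖ * ((k:ℝ)^m * ‖y‖^k)
          = ‖d‖ * ((k:ℝ)^m * ((‖y‖^k / ‖x‖^k) * ‖x‖^k)) := by
            rw [div_mul_cancel₀ _ (pow_ne_zero k (ne_of_gt hx0))]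
        _ = (‖d‖ * (‖y‖/‖x‖)^k) * ((k:ℝ)^m * ‖x‖^k) := by rw [div_pow]; ring
    rw [heq]
    exact mul_lt_mul_of_pos_right hk2 (by positivity)
  have htri : ‖A‖ ≤ ‖A + B‖ + ‖B‖ := by
    have : A = (A + B) + (-B) := by ring
    calc ‖A‖ = ‖(A + B) + (-B)‖ := by rw [← this]
      _ ≤ ‖A + B‖ + ‖-B‖ := norm_add_le _ _
      _ = ‖A + B‖ + ‖B‖ := by rw [norm_neg]
  have hkm : (1:ℝ) ≤ (k:ℝ)^m := by
    have hk : (1:ℝ) ≤ (k:ℝ) := by exact_mod_cast hk1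
    simpa using pow_le_pow_left₀ (by norm_num : (0:ℝ) ≤ 1) hk m
  have hxk : (1:ℝ) ≤ ‖x‖^k := by
    simpa using pow_le_pow_left₀ (by norm_num : (0:ℝ) ≤ 1) hx k
  have hP : (1:ℝ) ≤ (k:ℝ)^m * ‖x‖^k := by nlinarith
  nlinarith [hk3, htri, hA, hBlt, hP, hc0, mul_nonneg (sub_nonneg.mpr hP) (le_of_lt hc0)]

lemma summable_aux (G : ℕ → ℂ) (hG : ∀ i, G (i + 2) = G (i + 1) + G i) (w : ℂ) (m : ℕ)
    (h : Tendsto (fun k : ℕ => (k:ℂ)^m * w^k * G k) atTop (nhds 0)) :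
    Summable (fun j : ℕ => w^j * (j:ℂ)^m * G j) := by
  set sr := Real.sqrt 5 with hsr
  have hs5 : sr^2 = 5 := Real.sq_sqrt (by norm_num)
  have hs2 : (2:ℝ) < sr := by nlinarith [Real.sqrt_nonneg 5]
  set αr : ℝ := (1 + sr)/2 with hαr
  set βr : ℝ := (1 - sr)/2 with hβr
  have hαc : ((αr:ℂ))^2 = (αr:ℂ) + 1 := by
    have : αr^2 = αr + 1 := by rw [hαr]; nlinarith
    norm_cast
  have hβc : ((βr:ℂ))^2 = (βr:ℂ) + 1 := by
    have : βr^2 = βr + 1 := by rw [hβr]; nlinarith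
    norm_cast
  have hscne : ((sr:ℂ)) ≠ 0 := by
    simp only [ne_eq, Complex.ofReal_eq_zero]
    nlinarith
  set a : ℂ := (G 1 - (βr:ℂ) * G 0) / (sr:ℂ) with ha
  set b : ℂ := ((αr:ℂ) * G 0 - G 1) / (sr:ℂ) with hb
  have hαβs : (αr:ℂ) - (βr:ℂ) = (sr:ℂ) := by
    rw [hαr, hβr]; push_cast; ring
  have hBinet : ∀ j, G j = a * (αr:ℂ)^j + b * (βr:ℂ)^j := by
    intro j
    induction j using Nat.twoStepInduction with
    | zero =>
      simp only [pow_zero, mul_one, ha, hb]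
      rw [← add_div, eq_div_iff hscne]
      linear_combination (-(G 0)) * hαβs
    | one =>
      simp only [pow_one, ha, hb]
      rw [div_mul_eq_mul_div, div_mul_eq_mul_div, ← add_div, eq_div_iff hscne]
      linear_combination (-(G 1)) * hαβs
    | more n ih1 ih2 =>
      rw [hG n, ih1, ih2]
      have e1 : (αr:ℂ)^(n+2) = (αr:ℂ)^(n+1) + (αr:ℂ)^n := by
        calc (αr:ℂ)^(n+2) = (αr:ℂ)^n * (αr:ℂ)^2 := by ring
          _ = (αr:ℂ)^n * ((αr:ℂ) + 1) := by rw [hαc]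
          _ = (αr:ℂ)^(n+1) + (αr:ℂ)^n := by ring
      have e2 : (βr:ℂ)^(n+2) = (βr:ℂ)^(n+1) + (βr:ℂ)^n := by
        calc (βr:ℂ)^(n+2) = (βr:ℂ)^n * (βr:ℂ)^2 := by ring
          _ = (βr:ℂ)^n * ((βr:ℂ) + 1) := by rw [hβc]
          _ = (βr:ℂ)^(n+1) + (βr:ℂ)^n := by ring
      rw [e1, e2]
      ring
  have hfeq : (fun j : ℕ => w^j * (j:ℂ)^m * G j)
      = fun j : ℕ => a * ((j:ℂ)^m * (w * (αr:ℂ))^j) + b * ((j:ℂ)^m * (w * (βr:ℂ))^j) := by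
    funext j
    rw [hBinet j, mul_pow, mul_pow]
    ring
  have hnβα : ‖((βr:ℂ))‖ < ‖((αr:ℂ))‖ := by
    rw [Complex.norm_real, Complex.norm_real, Real.norm_eq_abs, Real.norm_eq_abs, hαr, hβr]
    rw [abs_of_nonpos (by linarith : (1 - sr)/2 ≤ 0),
      abs_of_nonneg (by linarith : (0:ℝ) ≤ (1 + sr)/2)]
    linarith
  have hlim' : Tendsto (fun k : ℕ => a * ((k:ℂ)^m * (w * (αr:ℂ))^k)
      + b * ((k:ℂ)^m * (w * (βr:ℂ))^k)) atTop (nhds 0) := by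
    have : (fun k : ℕ => (k:ℂ)^m * w^k * G k)
        = fun k : ℕ => a * ((k:ℂ)^m * (w * (αr:ℂ))^k) + b * ((k:ℂ)^m * (w * (βr:ℂ))^k) := by
      funext k; rw [hBinet k, mul_pow, mul_pow]; ring
    rwa [this] at h
  have hwβα : ‖w * (βr:ℂ)‖ ≤ ‖w * (αr:ℂ)‖ := by
    rw [norm_mul, norm_mul]
    exact mul_le_mul_of_nonneg_left hnβα.le (norm_nonneg w)
  by_cases hα1 : ‖w * (αr:ℂ)‖ < 1
  · rw [hfeq]
    exact ((summable_pow_mul_geometric_of_norm_lt_one m hα1).mul_left a).add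
      ((summable_pow_mul_geometric_of_norm_lt_one m (lt_of_le_of_lt hwβα hα1)).mul_left b)
  · push_neg at hα1
    have ha0 : a = 0 := by
      by_contra hane
      have hwne : w ≠ 0 := by
        intro hw0
        rw [hw0] at hα1
        simp at hα1
        linarith
      have hstrict : ‖w * (βr:ℂ)‖ < ‖w * (αr:ℂ)‖ := by
        rw [norm_mul, norm_mul]
        exact mul_lt_mul_of_pos_left hnβα (norm_pos_iff.mpr hwne)
      exact not_tendsto_aux a b (w * (αr:ℂ)) (w * (βr:ℂ)) m hane hα1 hstrict hlim'
    rw [hfeq]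
    by_cases hβ1 : ‖w * (βr:ℂ)‖ < 1
    · simp only [ha0, zero_mul, zero_add]
      exact (summable_pow_mul_geometric_of_norm_lt_one m hβ1).mul_left b
    · push_neg at hβ1
      have hb0 : b = 0 := by
        by_contra hbne
        apply not_tendsto_aux b 0 (w * (βr:ℂ)) 0 m hbne hβ1 (by simpa using lt_of_lt_of_le one_pos hβ1)
        simp only [zero_mul, add_zero]
        have : (fun k : ℕ => b * ((k:ℂ)^m * (w * (βr:ℂ))^k))
            = fun k : ℕ => a * ((k:ℂ)^m * (w * (αr:ℂ))^k) + b * ((k:ℂ)^m * (w * (βr:ℂ))^k) := by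
          funext k; rw [ha0]; ring
        rw [this]
        exact hlim'
      simp only [ha0, hb0, zero_mul, add_zero]
      exact summable_zero
theorem weighted_sum_infinite (G : ℕ → ℂ) (hG : ∀ i, G (i + 2) = G (i + 1) + G i)
    (r : ℕ) (w : ℂ) (hw : 1 - w - w ^ 2 ≠ 0)
    (hlim : ∀ m ≤ r, Filter.Tendsto (fun k : ℕ => (k : ℂ) ^ m * w ^ k * G k)
      Filter.atTop (nhds 0)) :
    HasSum (fun j : ℕ => w ^ j * (j : ℂ) ^ r * G j)
      (-G 0 * ∑ m ∈ Finset.range (r + 1),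
          (r.choose m : ℂ) * (w - if r = m then 1 else 0) * A w m
        + w * G 1 * ∑ m ∈ Finset.range (r + 1), (r.choose m : ℂ) * A w m) := by
  have hSum : ∀ m, m ≤ r → Summable (fun j : ℕ => w^j * (j:ℂ)^m * G j) :=
    fun m hm => summable_aux G hG w m (hlim m hm)
  have hTend : ∀ m, m ≤ r →
      Tendsto (fun n => Pp G w m n) atTop (nhds (∑' j : ℕ, w^j * (j:ℂ)^m * G j)) := by
    intro m hm
    exact (hSum m hm).hasSum.tendsto_sum_nat
  have hLrel : ∀ m, m ≤ r → (1 - w - w^2) * (∑' j : ℕ, w^j * (j:ℂ)^m * G j)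
      = ((0:ℂ)^m * G 0 + w * G 1 - w * G 0)
        + w * ∑ k ∈ Finset.range m, (m.choose k : ℂ) * (∑' j : ℕ, w^j * (j:ℂ)^k * G j)
        + w^2 * ∑ k ∈ Finset.range m, (m.choose k : ℂ) * 2^(m-k)
            * (∑' j : ℕ, w^j * (j:ℂ)^k * G j) := by
    intro m hm
    have h2 : Tendsto (fun n => Pp G w m (n+2)) atTop (nhds (∑' j : ℕ, w^j * (j:ℂ)^m * G j)) :=
      (hTend m hm).comp (tendsto_add_atTop_nat 2)
    have h1 : Tendsto (fun n => Pp G w m (n+1)) atTop (nhds (∑' j : ℕ, w^j * (j:ℂ)^m * G j)) :=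
      (hTend m hm).comp (tendsto_add_atTop_nat 1)
    have hks : ∀ k ∈ Finset.range m, k ≤ r := by
      intro k hk
      have := Finset.mem_range.mp hk
      omega
    have hS1 : Tendsto (fun n => ∑ k ∈ Finset.range m, (m.choose k : ℂ) * Pp G w k (n+1))
        atTop (nhds (∑ k ∈ Finset.range m,
          (m.choose k : ℂ) * (∑' j : ℕ, w^j * (j:ℂ)^k * G j))) := by
      refine tendsto_finset_sum _ (fun k hk => ?_)
      exact (((hTend k (hks k hk)).comp (tendsto_add_atTop_nat 1)).const_mul _)
    have hS2 : Tendsto (fun n => ∑ k ∈ Finset.range m,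
          (m.choose k : ℂ) * 2^(m-k) * Pp G w k n)
        atTop (nhds (∑ k ∈ Finset.range m,
          (m.choose k : ℂ) * 2^(m-k) * (∑' j : ℕ, w^j * (j:ℂ)^k * G j))) := by
      refine tendsto_finset_sum _ (fun k hk => ?_)
      exact ((hTend k (hks k hk)).const_mul _)
    have hRHS : Tendsto (fun n => w * Pp G w m (n+1) + w^2 * Pp G w m n
          + ((0:ℂ)^m * G 0 + w * G 1 - w * G 0)
          + w * ∑ k ∈ Finset.range m, (m.choose k : ℂ) * Pp G w k (n+1)
          + w^2 * ∑ k ∈ Finset.range m, (m.choose k : ℂ) * 2^(m-k) * Pp G w k n)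
        atTop (nhds (w * (∑' j : ℕ, w^j * (j:ℂ)^m * G j)
          + w^2 * (∑' j : ℕ, w^j * (j:ℂ)^m * G j)
          + ((0:ℂ)^m * G 0 + w * G 1 - w * G 0)
          + w * (∑ k ∈ Finset.range m, (m.choose k : ℂ) * (∑' j : ℕ, w^j * (j:ℂ)^k * G j))
          + w^2 * (∑ k ∈ Finset.range m, (m.choose k : ℂ) * 2^(m-k)
              * (∑' j : ℕ, w^j * (j:ℂ)^k * G j)))) := by
      exact ((((h1.const_mul w).add ((hTend m hm).const_mul (w^2))).add
        tendsto_const_nhds).add (hS1.const_mul w)).add (hS2.const_mul (w^2))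
    have heq : (fun n => Pp G w m (n+2)) = (fun n => w * Pp G w m (n+1) + w^2 * Pp G w m n
          + ((0:ℂ)^m * G 0 + w * G 1 - w * G 0)
          + w * ∑ k ∈ Finset.range m, (m.choose k : ℂ) * Pp G w k (n+1)
          + w^2 * ∑ k ∈ Finset.range m, (m.choose k : ℂ) * 2^(m-k) * Pp G w k n) := by
      funext n
      exact P_rec G hG w m n
    rw [heq] at h2
    have := tendsto_nhds_unique h2 hRHS
    linear_combination this
  have hLV : ∀ m, m ≤ r → (∑' j : ℕ, w^j * (j:ℂ)^m * G j) = Vv G w m := by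
    intro m
    induction m using Nat.strong_induction_on with
    | _ m ih =>
      intro hm
      have h1 := hLrel m hm
      have e1 : ∑ k ∈ Finset.range m, (m.choose k : ℂ) * (∑' j : ℕ, w^j * (j:ℂ)^k * G j)
          = ∑ k ∈ Finset.range m, (m.choose k : ℂ) * Vv G w k := by
        refine Finset.sum_congr rfl (fun k hk => ?_)
        have hkm := Finset.mem_range.mp hk
        rw [ih k hkm (by omega)]
      have e2 : ∑ k ∈ Finset.range m, (m.choose k : ℂ) * 2^(m-k)
            * (∑' j : ℕ, w^j * (j:ℂ)^k * G j)
          = ∑ k ∈ Finset.range m, (m.choose k : ℂ) * 2^(m-k) * Vv G w k := by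
        refine Finset.sum_congr rfl (fun k hk => ?_)
        have hkm := Finset.mem_range.mp hk
        rw [ih k hkm (by omega)]
      rw [e1, e2] at h1
      have h2 := V_rel G w hw m
      have h3 : (1 - w - w^2) * (∑' j : ℕ, w^j * (j:ℂ)^m * G j)
          = (1 - w - w^2) * Vv G w m := by rw [h1, h2]
      exact mul_left_cancel₀ hw h3
  have hδ : ∑ m ∈ Finset.range (r + 1), (r.choose m : ℂ) * (w - if r = m then 1 else 0) * A w m
      = w * Sv w r - A w r := by
    have hterm : ∀ m ∈ Finset.range (r+1),
        (r.choose m : ℂ) * (w - if r = m then 1 else 0) * A w m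
          = w * ((r.choose m : ℂ) * A w m) - (if r = m then A w m else 0) := by
      intro m hm
      by_cases h : r = m
      · subst h
        simp [Nat.choose_self]
        ring
      · simp [h]
        ring
    rw [Finset.sum_congr rfl hterm, Finset.sum_sub_distrib, ← Finset.mul_sum,
      Finset.sum_ite_eq (Finset.range (r+1)) r (fun m => A w m)]
    simp [Sv, Finset.mem_range]
  have hval : (-G 0 * ∑ m ∈ Finset.range (r + 1),
          (r.choose m : ℂ) * (w - if r = m then 1 else 0) * A w m
        + w * G 1 * ∑ m ∈ Finset.range (r + 1), (r.choose m : ℂ) * A w m)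
      = ∑' j : ℕ, w^j * (j:ℂ)^r * G j := by
    rw [hLV r le_rfl, hδ]
    simp only [Vv, Sv]
  rw [hval]
  exact (hSum r le_rfl).hasSum
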